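/- arXiv:2410.20370 — 2 statements merged into one kernel-verified Lean document; each statement's English description precedes it below -/
import Mathlib

section
/- Let S ⊂ ℝⁿ₊ be a compact convex lower set with 0 ∈ S. Then H_S is Lipschitz continuous on ℂⁿ with Lipschitz constant σ_S = φ_S(1,…,1); that is, |H_S(z) − H_S(w)| ≤ σ_S |z − w| for all z, w ∈ ℂⁿ, where |·| is the Euclidean norm on ℂⁿ. Moreover, for such S one has H_S(z) = φ_S(log⁺|z₁|, …, log⁺|zₙ|) for all z ∈ ℂⁿ, where log⁺ t = max(log t, 0). -/
open MeasureTheory Filter Topology Set Pointwise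
open scoped ENNReal NNReal Classical

noncomputable section

/-- The positive orthant `ℝⁿ₊ = [0,∞)ⁿ`. -/
def posOrthant (n : ℕ) : Set (Fin n → ℝ) := {x | ∀ i, 0 ≤ x i}

/-- The supporting function `φ_S(ξ) = sup_{x ∈ S} ⟨x, ξ⟩` of a set `S ⊆ ℝⁿ`. -/
def suppFn {n : ℕ} (S : Set (Fin n → ℝ)) (ξ : Fin n → ℝ) : ℝ :=
  sSup ((fun x => ∑ i, x i * ξ i) '' S)

/-- `σ_S = φ_S(1,…,1)`. -/
def sigmaS {n : ℕ} (S : Set (Fin n → ℝ)) : ℝ := suppFn S 1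

/-- `ℂ*ⁿ = (ℂ ∖ {0})ⁿ`. -/
def torusComp (n : ℕ) : Set (Fin n → ℂ) := {z | ∀ i, z i ≠ 0}

/-- The logarithmic supporting function `H_S`:
`H_S(z) = φ_S(log|z₁|,…,log|zₙ|)` on `ℂ*ⁿ`, and the limsup over `ℂ*ⁿ ∋ w → z` elsewhere. -/
def HS {n : ℕ} (S : Set (Fin n → ℝ)) (z : Fin n → ℂ) : ℝ :=
  if z ∈ torusComp n then suppFn S (fun i => Real.log (‖z i‖))
  else Filter.limsup (fun w => suppFn S (fun i => Real.log (‖w i‖))) (𝓝[torusComp n] z)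

/-- The positive part of an extended real number, as an element of `ℝ≥0∞`. -/
def erealPos (x : EReal) : ℝ≥0∞ := if x = ⊤ then ⊤ else ENNReal.ofReal x.toReal

/-- The circle integral `∫₀^{2π} u(a + r e^{iθ} b) dθ` for an `EReal`-valued `u`,
defined as the (upper) integral of the positive part minus that of the negative part. -/
def circInt {n : ℕ} (u : (Fin n → ℂ) → EReal) (a b : Fin n → ℂ) (r : ℝ) : EReal :=
  ((∫⁻ θ in Set.Ioc (0 : ℝ) (2 * Real.pi),
      erealPos (u (a + ((r : ℂ) * Complex.exp ((θ : ℂ) * Complex.I)) • b))) : EReal) -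
  ((∫⁻ θ in Set.Ioc (0 : ℝ) (2 * Real.pi),
      erealPos (-u (a + ((r : ℂ) * Complex.exp ((θ : ℂ) * Complex.I)) • b))) : EReal)

/-- `u : Ω → [−∞,∞)` is plurisubharmonic on an open `Ω ⊆ ℂⁿ`: upper semicontinuous on `Ω`,
`< +∞` on `Ω`, not identically `−∞` on any connected component of `Ω`, and satisfying the
submean inequality `2π · u(a) ≤ ∫₀^{2π} u(a + r e^{iθ} b) dθ` over closed discs
`{a + ζ b : |ζ| ≤ r} ⊆ Ω` in complex lines. -/
def PshOn {n : ℕ} (Ω : Set (Fin n → ℂ)) (u : (Fin n → ℂ) → EReal) : Prop :=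
  UpperSemicontinuousOn u Ω ∧
  (∀ z ∈ Ω, u z ≠ ⊤) ∧
  (∀ z ∈ Ω, ∃ w ∈ connectedComponentIn Ω z, u w ≠ ⊥) ∧
  ∀ a b : Fin n → ℂ, ∀ r : ℝ, 0 < r →
    (∀ ζ : ℂ, ‖ζ‖ ≤ r → a + ζ • b ∈ Ω) →
    ((2 * Real.pi : ℝ) : EReal) * u a ≤ circInt u a b r

/-- The Lelong class `L^S(ℂⁿ)`: plurisubharmonic functions on `ℂⁿ` with `u ≤ H_S + c_u`. -/
def LelongClass {n : ℕ} (S : Set (Fin n → ℝ)) (u : (Fin n → ℂ) → EReal) : Prop :=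
  PshOn Set.univ u ∧ ∃ c : ℝ, ∀ z, u z ≤ ((HS S z + c : ℝ) : EReal)

/-- The Euclidean norm on `ℂⁿ`. -/
def eucNorm {n : ℕ} (z : Fin n → ℂ) : ℝ := Real.sqrt (∑ i, ‖z i‖ ^ 2)

/-- A distance function on `ℂⁿ`: continuous, vanishing exactly at `0`, and absolutely
homogeneous with respect to complex scalars. -/
def IsDistFn {n : ℕ} (μ : (Fin n → ℂ) → ℝ) : Prop :=
  Continuous μ ∧ (∀ z, 0 ≤ μ z) ∧ (∀ z, μ z = 0 ↔ z = 0) ∧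
    ∀ (t : ℂ) (z : Fin n → ℂ), μ (t • z) = ‖t‖ * μ z

/-- `r_μ = inf_{|z| = 1} μ(z)` (Euclidean unit sphere). -/
def rMu {n : ℕ} (μ : (Fin n → ℂ) → ℝ) : ℝ := sInf (μ '' {z | eucNorm z = 1})

/-- `S` is a lower set: `x ∈ S` implies `[0,x₁] × ⋯ × [0,xₙ] ⊆ S`. -/
def IsLowerIn {n : ℕ} (S : Set (Fin n → ℝ)) : Prop :=
  ∀ x ∈ S, ∀ y : Fin n → ℝ, (∀ i, 0 ≤ y i ∧ y i ≤ x i) → y ∈ S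

/-- The standard simplex `Σ = ch{0, e₁, …, eₙ}`. -/
def stdSimpl (n : ℕ) : Set (Fin n → ℝ) :=
  convexHull ℝ (insert 0 (Set.range fun i => Pi.single i 1))


lemma logpos_eq_log_max {a : ℝ} (ha : 0 ≤ a) :
    max (Real.log a) 0 = Real.log (max a 1) := by
  rcases le_or_gt 1 a with h | h
  · rw [max_eq_left h, max_eq_left (Real.log_nonneg h)]
  · rw [max_eq_right h.le, Real.log_one, max_eq_right (Real.log_nonpos ha h.le)]

lemma log_sub_log_le' {a b : ℝ} (hb : 1 ≤ b) (hab : b ≤ a) :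
    Real.log a - Real.log b ≤ a - b := by
  have hb0 : (0 : ℝ) < b := lt_of_lt_of_le one_pos hb
  have ha0 : (0 : ℝ) < a := lt_of_lt_of_le hb0 hab
  rw [← Real.log_div ha0.ne' hb0.ne']
  have h1 : Real.log (a / b) ≤ a / b - 1 := Real.log_le_sub_one_of_pos (div_pos ha0 hb0)
  have h2 : a / b - 1 ≤ a - b := by
    rw [div_sub_one hb0.ne']
    have := div_le_self (sub_nonneg.mpr hab) hb
    linarith
  linarith

lemma logpos_lip {a b : ℝ} (ha : 0 ≤ a) (hb : 0 ≤ b) :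
    |max (Real.log a) 0 - max (Real.log b) 0| ≤ |a - b| := by
  rw [logpos_eq_log_max ha, logpos_eq_log_max hb]
  have key : ∀ u v : ℝ, 1 ≤ u → 1 ≤ v → Real.log u - Real.log v ≤ |u - v| := by
    intro u v hu hv
    rcases le_total u v with h | h
    · have := Real.log_le_log (by linarith : (0:ℝ) < u) h
      have := abs_nonneg (u - v)
      linarith
    · exact (log_sub_log_le' hv h).trans (le_abs_self _)
  rw [abs_sub_le_iff]
  constructor
  · exact (key _ _ (le_max_right a 1) (le_max_right b 1)).trans
      (abs_max_sub_max_le_abs a b 1)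
  · refine (key _ _ (le_max_right b 1) (le_max_right a 1)).trans ?_
    rw [abs_sub_comm]
    exact (abs_max_sub_max_le_abs a b 1).trans (by rw [abs_sub_comm])

/-- If `S ⊆ ℝⁿ₊` is a compact convex lower set with `0 ∈ S`, then `H_S` is
Lipschitz on `ℂⁿ` with constant `σ_S = φ_S(1,…,1)` (Euclidean norm), and
`H_S(z) = φ_S(log⁺|z₁|,…,log⁺|zₙ|)` for all `z ∈ ℂⁿ`. -/
theorem statement10 {n : ℕ} (S : Set (Fin n → ℝ))
    (hSsub : S ⊆ posOrthant n) (hSconv : Convex ℝ S) (hScomp : IsCompact S)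
    (hS0 : (0 : Fin n → ℝ) ∈ S) (hSlow : IsLowerIn S) :
    (∀ z w : Fin n → ℂ, |HS S z - HS S w| ≤ sigmaS S * eucNorm (z - w)) ∧
    (∀ z : Fin n → ℂ,
      HS S z = suppFn S fun i => max (Real.log (‖z i‖)) 0) := by
  classical
  have hne : S.Nonempty := ⟨0, hS0⟩
  have cont : ∀ ξ : Fin n → ℝ, Continuous (fun x : Fin n → ℝ => ∑ i, x i * ξ i) := by
    intro ξ
    exact continuous_finset_sum _ fun i _ => (continuous_apply i).mul continuous_const
  have hbdd : ∀ ξ : Fin n → ℝ, BddAbove ((fun x => ∑ i, x i * ξ i) '' S) :=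
    fun ξ => (hScomp.image (cont ξ)).bddAbove
  have le_supp : ∀ ξ : Fin n → ℝ, ∀ x ∈ S, ∑ i, x i * ξ i ≤ suppFn S ξ :=
    fun ξ x hx => le_csSup (hbdd ξ) ⟨x, hx, rfl⟩
  have supp_le : ∀ (ξ : Fin n → ℝ) (c : ℝ), (∀ x ∈ S, ∑ i, x i * ξ i ≤ c) → suppFn S ξ ≤ c := by
    intro ξ c h
    refine csSup_le (hne.image _) ?_
    rintro _ ⟨x, hx, rfl⟩
    exact h x hx
  -- lower-set identity: suppFn S ξ = suppFn S ξ⁺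
  have hB : ∀ ξ : Fin n → ℝ, suppFn S ξ = suppFn S (fun i => max (ξ i) 0) := by
    intro ξ
    apply le_antisymm
    · refine supp_le _ _ fun x hx => ?_
      refine le_trans ?_ (le_supp (fun i => max (ξ i) 0) x hx)
      exact Finset.sum_le_sum fun i _ =>
        mul_le_mul_of_nonneg_left (le_max_left _ _) (hSsub hx i)
    · refine supp_le _ _ fun x hx => ?_
      set y : Fin n → ℝ := fun i => if 0 ≤ ξ i then x i else 0 with hy
      have hyS : y ∈ S := by
        refine hSlow x hx y fun i => ?_
        by_cases h : 0 ≤ ξ i <;> simp [hy, h, hSsub hx i]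
      have hsum : ∑ i, x i * max (ξ i) 0 = ∑ i, y i * ξ i := by
        refine Finset.sum_congr rfl fun i _ => ?_
        by_cases h : 0 ≤ ξ i
        · simp [hy, h, max_eq_left h]
        · simp [hy, h, max_eq_right (le_of_not_ge h)]
      rw [hsum]
      exact le_supp ξ y hyS
  have hsum_le : ∀ x ∈ S, ∑ i, x i ≤ sigmaS S := by
    intro x hx
    have := le_supp 1 x hx
    simpa [sigmaS] using this
  have hE0 : ∀ v : Fin n → ℂ, 0 ≤ eucNorm v := fun v => Real.sqrt_nonneg _
  have coord_le : ∀ (v : Fin n → ℂ) (i : Fin n), ‖v i‖ ≤ eucNorm v := by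
    intro v i
    rw [eucNorm, show ‖v i‖ = Real.sqrt (‖v i‖ ^ 2) from
      (Real.sqrt_sq (norm_nonneg _)).symm]
    exact Real.sqrt_le_sqrt
      (Finset.single_le_sum (f := fun j => ‖v j‖ ^ 2)
        (fun j _ => sq_nonneg _) (Finset.mem_univ i))
  set g : (Fin n → ℂ) → ℝ :=
    fun z => suppFn S (fun i => max (Real.log (‖z i‖)) 0) with hg
  have key : ∀ z w : Fin n → ℂ, g z - g w ≤ sigmaS S * eucNorm (z - w) := by
    intro z w
    rw [sub_le_iff_le_add]
    refine supp_le _ _ fun x hx => ?_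
    have h1 : ∀ i : Fin n, x i * max (Real.log (‖z i‖)) 0 ≤
        x i * max (Real.log (‖w i‖)) 0 + x i * eucNorm (z - w) := by
      intro i
      have hlip := logpos_lip (norm_nonneg (z i)) (norm_nonneg (w i))
      have h2 : |‖z i‖ - ‖w i‖| ≤ ‖z i - w i‖ := by
        exact abs_norm_sub_norm_le (z i) (w i)
      have h3 : max (Real.log (‖z i‖)) 0 - max (Real.log (‖w i‖)) 0
          ≤ eucNorm (z - w) :=
        calc max (Real.log (‖z i‖)) 0 - max (Real.log (‖w i‖)) 0
            ≤ |max (Real.log (‖z i‖)) 0 - max (Real.log (‖w i‖)) 0| :=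
              le_abs_self _
          _ ≤ |‖z i‖ - ‖w i‖| := hlip
          _ ≤ ‖z i - w i‖ := h2
          _ = ‖(z - w) i‖ := rfl
          _ ≤ eucNorm (z - w) := coord_le _ i
      have hxi : 0 ≤ x i := hSsub hx i
      nlinarith
    calc ∑ i, x i * max (Real.log (‖z i‖)) 0
        ≤ ∑ i, (x i * max (Real.log (‖w i‖)) 0 + x i * eucNorm (z - w)) :=
          Finset.sum_le_sum fun i _ => h1 i
      _ = (∑ i, x i * max (Real.log (‖w i‖)) 0)
            + (∑ i, x i) * eucNorm (z - w) := by
          rw [Finset.sum_add_distrib, ← Finset.sum_mul]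
      _ ≤ g w + sigmaS S * eucNorm (z - w) :=
          add_le_add (le_supp _ x hx)
            (mul_le_mul_of_nonneg_right (hsum_le x hx) (hE0 _))
      _ = sigmaS S * eucNorm (z - w) + g w := add_comm _ _
  have eucNorm_comm : ∀ z w : Fin n → ℂ, eucNorm (w - z) = eucNorm (z - w) := by
    intro z w
    unfold eucNorm
    congr 1
    refine Finset.sum_congr rfl fun i _ => ?_
    rw [show (w - z) i = w i - z i from rfl, show (z - w) i = z i - w i from rfl,
      norm_sub_rev]
  have keyAbs : ∀ z w : Fin n → ℂ, |g z - g w| ≤ sigmaS S * eucNorm (z - w) := by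
    intro z w
    rw [abs_sub_le_iff]
    refine ⟨key z w, ?_⟩
    have := key w z
    rwa [eucNorm_comm] at this
  have hgc : Continuous g := by
    refine continuous_iff_continuousAt.mpr fun z => ?_
    have hEcont : Continuous (fun w : Fin n → ℂ => eucNorm (w - z)) := by
      refine Real.continuous_sqrt.comp (continuous_finset_sum _ fun i _ => ?_)
      exact (continuous_norm.comp ((continuous_apply i).sub continuous_const)).pow 2
    have h0 : Tendsto (fun w : Fin n → ℂ => eucNorm (w - z)) (𝓝 z) (𝓝 0) := by
      have := hEcont.tendsto z
      simpa [eucNorm] using this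
    have hsq : Tendsto (fun w => |g w - g z|) (𝓝 z) (𝓝 0) := by
      refine squeeze_zero (fun w => abs_nonneg _) (fun w => (keyAbs w z).trans ?_)
        (by simpa using h0.const_mul (sigmaS S))
      rw [eucNorm_comm]
    have h1 : Tendsto (fun w => g w - g z) (𝓝 z) (𝓝 0) :=
      tendsto_of_tendsto_of_tendsto_of_le_of_le (by simpa using hsq.neg) hsq
        (fun w => neg_abs_le _) (fun w => le_abs_self _)
    have := h1.add_const (g z)
    simp at this
    exact this
  have part2 : ∀ z : Fin n → ℂ,
      HS S z = suppFn S fun i => max (Real.log (‖z i‖)) 0 := by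
    intro z
    by_cases hz : z ∈ torusComp n
    · rw [HS, if_pos hz]
      exact hB _
    · rw [HS, if_neg hz]
      have hcl : z ∈ closure (torusComp n) := by
        have htend : Tendsto
            (fun k : ℕ => (fun i => if z i = 0 then ((1 : ℂ)/(k + 1)) else z i))
            atTop (𝓝 z) := by
          rw [tendsto_pi_nhds]
          intro i
          by_cases h : z i = 0
          · have hr : Tendsto (fun k : ℕ => ((1 : ℂ)/(k + 1))) atTop (𝓝 0) := by
              rw [tendsto_zero_iff_norm_tendsto_zero]
              refine tendsto_one_div_add_atTop_nhds_zero_nat.congr fun k => ?_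
              rw [eq_comm, norm_div, norm_one]
              congr 1
              have hcast : ((k : ℂ) + 1) = (((k : ℝ) + 1 : ℝ) : ℂ) := by push_cast; ring
              rw [hcast, Complex.norm_real, Real.norm_eq_abs, abs_of_pos (by positivity)]
            simpa [h] using hr
          · simp [h]
        refine mem_closure_of_tendsto htend (Filter.Eventually.of_forall fun k => ?_)
        intro i
        by_cases h : z i = 0
        · show (if z i = 0 then (1 : ℂ)/(k + 1) else z i) ≠ 0
          rw [if_pos h]
          have hk : ((k : ℂ) + 1) ≠ 0 := by
            exact_mod_cast Nat.succ_ne_zero k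
          exact one_div_ne_zero hk
        · show (if z i = 0 then (1 : ℂ)/(k + 1) else z i) ≠ 0
          rw [if_neg h]
          exact h
      haveI : (𝓝[torusComp n] z).NeBot := mem_closure_iff_nhdsWithin_neBot.mp hcl
      have heq : (fun w : Fin n → ℂ => suppFn S (fun i => Real.log (‖w i‖)))
          =ᶠ[𝓝[torusComp n] z] g := by
        filter_upwards [self_mem_nhdsWithin] with w _
        exact hB _
      rw [Filter.limsup_congr heq]
      exact ((hgc.tendsto z).mono_left nhdsWithin_le_nhds).limsup_eq
  refine ⟨fun z w => ?_, part2⟩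
  rw [part2 z, part2 w]
  exact keyAbs z w

end
end

section
/- Let S ⊂ ℝⁿ₊ be compact convex with 0 ∈ S, and suppose S is not a lower set. Then the class L^S₊(ℂⁿ) contains no uniformly continuous functions; that is, if u : ℂⁿ → ℝ is plurisubharmonic and there exist constants c₁, c₂ ∈ ℝ with H_S − c₁ ≤ u ≤ H_S + c₂ on ℂⁿ, then u is not uniformly continuous. In particular no such u is Hölder continuous. -/
open MeasureTheory Filter Topology Set Pointwise
open scoped ENNReal NNReal Classical

noncomputable section

section AuxLemmas

variable {n : ℕ}

private lemma dotCont (v : Fin n → ℝ) : Continuous (fun a : Fin n → ℝ => ∑ i, a i * v i) :=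
  continuous_finset_sum _ fun i _ => (continuous_apply i).mul continuous_const

private lemma suppFn_bdd {S : Set (Fin n → ℝ)} (hScomp : IsCompact S) (v : Fin n → ℝ) :
    BddAbove ((fun a : Fin n → ℝ => ∑ i, a i * v i) '' S) :=
  (hScomp.image (dotCont v)).bddAbove

/-- Lemma A: a direction `ξ`, negative on a nonempty coordinate set `J`, such that the
support function of `S` strictly exceeds (by `δ₀`) the bound `L` valid on `S ∩ {x_J = 0}`. -/
private lemma auxA {S : Set (Fin n → ℝ)} (hSsub : S ⊆ posOrthant n) (hSconv : Convex ℝ S)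
    (hScomp : IsCompact S) (hS0 : (0 : Fin n → ℝ) ∈ S) (hSnl : ¬ IsLowerIn S) :
    ∃ (ξ : Fin n → ℝ) (L δ₀ : ℝ), 0 < δ₀ ∧
      (∀ a ∈ S, (∀ i, ξ i < 0 → a i = 0) → ∑ i, a i * ξ i ≤ L) ∧
      L + δ₀ ≤ suppFn S ξ := by
  have hSne : S.Nonempty := ⟨0, hS0⟩
  rw [IsLowerIn] at hSnl; push_neg at hSnl
  obtain ⟨x, hx, y, hyx, hyS⟩ := hSnl
  obtain ⟨f, c, hfS, hfy⟩ := geometric_hahn_banach_closed_point hSconv hScomp.isClosed hyS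
  set η : Fin n → ℝ := fun i => f (Pi.single i 1) with hη
  have hfrep : ∀ a : Fin n → ℝ, f a = ∑ i, a i * η i := by
    intro a
    have ha : a = ∑ i, a i • (Pi.single i (1:ℝ) : Fin n → ℝ) := by
      funext j
      rw [Finset.sum_apply]
      simp [Pi.single_apply, mul_ite, Finset.sum_ite_eq']
    conv_lhs => rw [ha]
    rw [map_sum]
    refine Finset.sum_congr rfl fun i _ => ?_
    rw [_root_.map_smul, smul_eq_mul]
  set ηp : Fin n → ℝ := fun i => max (η i) 0 with hηp
  set ηm : Fin n → ℝ := fun i => max (-η i) 0 with hηm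
  have hyηp : ∑ i, y i * η i ≤ ∑ i, x i * ηp i := by
    apply Finset.sum_le_sum; intro i _
    rcases hyx i with ⟨h0, h1⟩
    calc y i * η i ≤ y i * ηp i := mul_le_mul_of_nonneg_left (le_max_left _ _) h0
      _ ≤ x i * ηp i := mul_le_mul_of_nonneg_right h1 (le_max_right _ _)
  have hcηp : c < suppFn S ηp := by
    have h1 : c < ∑ i, y i * η i := by rw [← hfrep]; exact hfy
    have h2 : (∑ i, x i * ηp i) ≤ suppFn S ηp := le_csSup (suppFn_bdd hScomp _) ⟨x, hx, rfl⟩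
    linarith
  set D : ℝ := suppFn S ηp - c with hD
  have hDpos : 0 < D := by simp only [hD]; linarith
  obtain ⟨b, hbmem, hx₀b⟩ := exists_lt_of_lt_csSup (hSne.image _)
    (show suppFn S ηp - D/4 < suppFn S ηp by linarith)
  obtain ⟨x₀, hx₀, rfl⟩ := hbmem
  set q : ℝ := ∑ i, x₀ i * ηm i with hq
  have hqnn : 0 ≤ q :=
    Finset.sum_nonneg fun i _ => mul_nonneg (hSsub hx₀ i) (le_max_right _ _)
  set θ : ℝ := min 1 (D / (4 * (q + 1))) with hθ
  have hθpos : 0 < θ := lt_min one_pos (by positivity)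
  set ξ : Fin n → ℝ := fun i => ηp i - θ * ηm i with hξ
  refine ⟨ξ, c, D/2, by linarith, ?_, ?_⟩
  · intro a ha hA
    have heq : ∑ i, a i * ξ i = ∑ i, a i * η i := by
      apply Finset.sum_congr rfl; intro i _
      by_cases hi : η i < 0
      · have hηpi : ηp i = 0 := max_eq_right hi.le
        have hηmi : ηm i = -η i := max_eq_left (by linarith)
        have hξi : ξ i < 0 := by
          simp only [hξ, hηpi, hηmi]
          have : 0 < θ * (-η i) := mul_pos hθpos (by linarith)
          linarith
        rw [hA i hξi]; ring
      · push_neg at hi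
        have hξeq : ξ i = η i := by
          simp only [hξ, hηp, hηm]
          rw [max_eq_left hi, max_eq_right (by linarith)]; ring
        rw [hξeq]
    rw [heq, ← hfrep]
    exact (hfS a ha).le
  · have hθq : θ * q ≤ D / 4 := by
      have h1 : θ * q ≤ (D / (4 * (q + 1))) * q :=
        mul_le_mul_of_nonneg_right (min_le_right _ _) hqnn
      have h2 : (D / (4 * (q + 1))) * q ≤ D / 4 := by
        rw [div_mul_eq_mul_div, div_le_div_iff₀ (by positivity) (by norm_num)]
        nlinarith
      linarith
    have hx₀ξ : ∑ i, x₀ i * ξ i = (∑ i, x₀ i * ηp i) - θ * q := by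
      rw [hq, Finset.mul_sum, ← Finset.sum_sub_distrib]
      apply Finset.sum_congr rfl; intro i _; simp only [hξ]; ring
    have hle : ∑ i, x₀ i * ξ i ≤ suppFn S ξ := le_csSup (suppFn_bdd hScomp _) ⟨x₀, hx₀, rfl⟩
    simp only [hD] at *
    linarith

/-- Lemma B: pushing the `J`-coordinates to `-∞` drives the support function down to `t·L`. -/
private lemma auxB {S : Set (Fin n → ℝ)} (hScomp : IsCompact S) (hSne : S.Nonempty)
    (hSpos : ∀ a ∈ S, ∀ i, (0:ℝ) ≤ a i) (ξ : Fin n → ℝ) (t L ε : ℝ) (ht : 0 < t) (hε : 0 < ε)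
    (hL : ∀ a ∈ S, (∀ i, ξ i < 0 → a i = 0) → ∑ i, a i * ξ i ≤ L) :
    ∃ s : ℝ, suppFn S (fun i => if ξ i < 0 then -s else t * ξ i) ≤ t * L + ε := by
  by_contra hcon
  push_neg at hcon
  set P : (Fin n → ℝ) → ℝ := fun a => ∑ i, a i * (if ξ i < 0 then 0 else t * ξ i) with hP
  set Q : (Fin n → ℝ) → ℝ := fun a => ∑ i, (if ξ i < 0 then a i else 0) with hQ
  have hPQ : ∀ (s : ℝ) (a : Fin n → ℝ),
      (∑ i, a i * (if ξ i < 0 then -s else t * ξ i)) = P a - s * Q a := by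
    intro s a
    simp only [hP, hQ, Finset.mul_sum, ← Finset.sum_sub_distrib]
    apply Finset.sum_congr rfl
    intro i _
    by_cases hi : ξ i < 0 <;> simp only [hi, if_true, if_false] <;> ring
  have hQnn : ∀ a ∈ S, 0 ≤ Q a := by
    intro a ha
    apply Finset.sum_nonneg
    intro i _
    by_cases hi : ξ i < 0 <;> simp only [hi, if_true, if_false, le_refl]
    exact hSpos a ha i
  have hPc : Continuous P := dotCont _
  have hQc : Continuous Q := by
    apply continuous_finset_sum
    intro i _
    by_cases hi : ξ i < 0 <;> simp only [hi, if_true, if_false]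
    exacts [continuous_apply i, continuous_const]
  set K : ℕ → Set (Fin n → ℝ) := fun m => S ∩ {a | t * L + ε ≤ P a - (m:ℝ) * Q a} with hK
  have hKcl : ∀ m, IsClosed (K m) :=
    fun m => hScomp.isClosed.inter
      (isClosed_le continuous_const (hPc.sub (continuous_const.mul hQc)))
  have hKcomp : ∀ m, IsCompact (K m) :=
    fun m => hScomp.inter_right (isClosed_le continuous_const (hPc.sub (continuous_const.mul hQc)))
  have hKne : ∀ m, (K m).Nonempty := by
    intro m
    obtain ⟨b, hbmem, hb⟩ := exists_lt_of_lt_csSup (hSne.image _) (hcon (m:ℝ))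
    obtain ⟨a, ha, rfl⟩ := hbmem
    exact ⟨a, ha, by rw [Set.mem_setOf_eq, ← hPQ]; exact hb.le⟩
  have hKanti : ∀ {m m' : ℕ}, m ≤ m' → K m' ⊆ K m := by
    intro m m' hmm a haa
    obtain ⟨ha, hineq⟩ := haa
    refine ⟨ha, ?_⟩
    rw [Set.mem_setOf_eq] at hineq ⊢
    have h1 : (m:ℝ) ≤ (m':ℝ) := by exact_mod_cast hmm
    nlinarith [hQnn a ha]
  have hKdir : Directed (· ⊇ ·) K := fun m m' =>
    ⟨max m m', hKanti (le_max_left _ _), hKanti (le_max_right _ _)⟩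
  obtain ⟨a, ha⟩ := IsCompact.nonempty_iInter_of_directed_nonempty_isCompact_isClosed
    K hKdir hKne hKcomp hKcl
  simp only [Set.mem_iInter] at ha
  have haS : a ∈ S := (ha 0).1
  have hall : ∀ m : ℕ, t * L + ε ≤ P a - (m:ℝ) * Q a := fun m => (ha m).2
  have hQ0 : Q a = 0 := by
    by_contra hQne
    have hQpos : 0 < Q a := lt_of_le_of_ne (hQnn a haS) (Ne.symm hQne)
    obtain ⟨m, hm⟩ := exists_nat_gt ((P a - (t * L + ε)) / Q a)
    have := hall m
    rw [div_lt_iff₀ hQpos] at hm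
    linarith
  have haJ : ∀ i, ξ i < 0 → a i = 0 := by
    intro i hi
    have h0 : ∀ j ∈ Finset.univ, (0:ℝ) ≤ (if ξ j < 0 then a j else 0) := by
      intro j _
      by_cases hj : ξ j < 0 <;> simp only [hj, if_true, if_false, le_refl]
      exact hSpos a haS j
    have := (Finset.sum_eq_zero_iff_of_nonneg h0).mp hQ0 i (Finset.mem_univ i)
    rwa [if_pos hi] at this
  have hPa : P a = t * ∑ i, a i * ξ i := by
    rw [hP, Finset.mul_sum]
    apply Finset.sum_congr rfl
    intro i _
    by_cases hi : ξ i < 0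
    · rw [haJ i hi]; simp [hi]
    · simp only [hi, if_false]; ring
  have hfin := hall 0
  rw [hPa, hQ0] at hfin
  have : t * (∑ i, a i * ξ i) ≤ t * L :=
    mul_le_mul_of_nonneg_left (hL a haS haJ) ht.le
  simp only [Nat.cast_zero, zero_mul, mul_zero, sub_zero] at hfin
  linarith

end AuxLemmas


set_option maxHeartbeats 1000000 in
/-- If the compact convex set `0 ∈ S ⊆ ℝⁿ₊` is not a lower set, then the
class `L^S₊(ℂⁿ)` contains no uniformly continuous functions: any plurisubharmonic
`u : ℂⁿ → ℝ` with `H_S − c₁ ≤ u ≤ H_S + c₂` is not uniformly continuous; in particular no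
such `u` is Hölder continuous. -/
theorem statement12 {n : ℕ} (S : Set (Fin n → ℝ))
    (hSsub : S ⊆ posOrthant n) (hSconv : Convex ℝ S) (hScomp : IsCompact S)
    (hS0 : (0 : Fin n → ℝ) ∈ S) (hSnl : ¬ IsLowerIn S)
    (u : (Fin n → ℂ) → ℝ) (hupsh : PshOn Set.univ (fun z => ((u z : ℝ) : EReal)))
    (c₁ c₂ : ℝ) (hlb : ∀ z, HS S z - c₁ ≤ u z) (hub : ∀ z, u z ≤ HS S z + c₂) :
    (¬ (∀ ε : ℝ, 0 < ε → ∃ d : ℝ, 0 < d ∧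
        ∀ x y : Fin n → ℂ, eucNorm y < d → |u (x + y) - u x| < ε)) ∧
    (∀ α C : ℝ, 0 < α → α ≤ 1 →
      ¬ ∀ x y : Fin n → ℂ, |u x - u y| ≤ C * eucNorm (x - y) ^ α) := by
  have hSne : S.Nonempty := ⟨0, hS0⟩
  have hSpos : ∀ a ∈ S, ∀ i, (0:ℝ) ≤ a i := fun a ha i => hSsub ha i
  obtain ⟨ξ, L, δ₀, hδ₀, hL, hgap⟩ := auxA hSsub hSconv hScomp hS0 hSnl
  have key : ¬ (∀ ε : ℝ, 0 < ε → ∃ d : ℝ, 0 < d ∧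
      ∀ x y : Fin n → ℂ, eucNorm y < d → |u (x + y) - u x| < ε) := by
    intro hUC
    obtain ⟨d, hd, hUC1⟩ := hUC 1 one_pos
    set d' : ℝ := d / (2 * ((n:ℝ) + 1)) with hd'
    have hd'pos : 0 < d' := by positivity
    -- choose t
    set T1 : ℝ := max 1 ((3 + c₁ + c₂) / δ₀) with hT1
    set T2 : ℝ := 1 + ∑ i, |Real.log d' / ξ i| with hT2
    set t : ℝ := max T1 T2 with htdef
    have ht1 : (1:ℝ) ≤ t := le_trans (le_max_left 1 _) (le_max_left T1 T2)
    have htpos : 0 < t := lt_of_lt_of_le one_pos ht1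
    have htgap : 3 + c₁ + c₂ ≤ t * δ₀ := by
      have h1 : (3 + c₁ + c₂) / δ₀ ≤ t := le_trans (le_max_right 1 _) (le_max_left T1 T2)
      rwa [div_le_iff₀ hδ₀] at h1
    have htsmall : ∀ i, ξ i < 0 → t * ξ i < Real.log d' := by
      intro i hi
      have h1 : |Real.log d' / ξ i| ≤ ∑ j, |Real.log d' / ξ j| :=
        Finset.single_le_sum (f := fun j => |Real.log d' / ξ j|)
          (fun j _ => abs_nonneg _) (Finset.mem_univ i)
      have h2 : Real.log d' / ξ i < t := by
        have := le_abs_self (Real.log d' / ξ i)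
        have hT2t : T2 ≤ t := le_max_right T1 T2
        rw [hT2] at hT2t
        linarith
      rwa [div_lt_iff_of_neg hi] at h2
    obtain ⟨s₀, hs₀⟩ := auxB hScomp hSne hSpos ξ t L 1 htpos one_pos hL
    set s : ℝ := max s₀ (1 + |Real.log d'|) with hsdef
    have hslog : -s < Real.log d' := by
      have h1 : 1 + |Real.log d'| ≤ s := le_max_right _ _
      have h2 := neg_abs_le (Real.log d')
      linarith
    have hss₀ : s₀ ≤ s := le_max_left _ _
    have hss : suppFn S (fun i => if ξ i < 0 then -s else t * ξ i) ≤ t * L + 1 := by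
      refine le_trans ?_ hs₀
      apply csSup_le (hSne.image _)
      rintro b ⟨a, ha, rfl⟩
      refine le_trans ?_ (le_csSup (suppFn_bdd hScomp _) ⟨a, ha, rfl⟩)
      apply Finset.sum_le_sum
      intro i _
      by_cases hi : ξ i < 0 <;> simp only [hi, if_true, if_false, le_refl]
      exact mul_le_mul_of_nonneg_left (neg_le_neg hss₀) (hSpos a ha i)
    -- the two points
    set z : Fin n → ℂ := fun i => ((Real.exp (t * ξ i) : ℝ) : ℂ) with hz
    set z' : Fin n → ℂ := fun i => if ξ i < 0 then ((Real.exp (-s) : ℝ) : ℂ) else z i with hz'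
    have hztor : z ∈ torusComp n := by
      intro i
      simp only [hz]
      exact Complex.ofReal_ne_zero.mpr (Real.exp_ne_zero _)
    have hz'tor : z' ∈ torusComp n := by
      intro i
      simp only [hz']
      by_cases hi : ξ i < 0 <;> simp only [hi, if_true, if_false]
      · exact Complex.ofReal_ne_zero.mpr (Real.exp_ne_zero _)
      · exact hztor i
    have hlogz : (fun i => Real.log (‖z i‖)) = fun i => t * ξ i := by
      funext i
      simp only [hz, Complex.norm_real, Real.norm_eq_abs, abs_of_pos (Real.exp_pos _), Real.log_exp]
    have hlogz' : (fun i => Real.log (‖z' i‖))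
        = fun i => if ξ i < 0 then -s else t * ξ i := by
      funext i
      by_cases hi : ξ i < 0 <;>
        simp only [hz', hz, hi, if_true, if_false, Complex.norm_real, Real.norm_eq_abs,
          abs_of_pos (Real.exp_pos _), Real.log_exp]
    have hHz : HS S z = suppFn S (fun i => t * ξ i) := by
      unfold HS
      rw [if_pos hztor]
      exact congrArg (suppFn S) hlogz
    have hHz' : HS S z' = suppFn S (fun i => if ξ i < 0 then -s else t * ξ i) := by
      unfold HS
      rw [if_pos hz'tor]
      exact congrArg (suppFn S) hlogz'
    -- scaling bound
    have hscale : t * suppFn S ξ ≤ suppFn S (fun i => t * ξ i) := by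
      have h1 : suppFn S ξ ≤ suppFn S (fun i => t * ξ i) / t := by
        apply csSup_le (hSne.image _)
        rintro b ⟨a, ha, rfl⟩
        rw [le_div_iff₀ htpos]
        calc (∑ i, a i * ξ i) * t = ∑ i, a i * (t * ξ i) := by
              rw [Finset.sum_mul]; exact Finset.sum_congr rfl fun i _ => by ring
          _ ≤ _ := le_csSup (suppFn_bdd hScomp _) ⟨a, ha, rfl⟩
      calc t * suppFn S ξ ≤ t * (suppFn S (fun i => t * ξ i) / t) :=
            mul_le_mul_of_nonneg_left h1 htpos.le
        _ = suppFn S (fun i => t * ξ i) := by field_simp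
    -- bounds on u
    have h1 : t * suppFn S ξ - c₁ ≤ u z := by
      have := hlb z
      rw [hHz] at this
      linarith
    have h2 : u z' ≤ t * L + 1 + c₂ := by
      have := hub z'
      rw [hHz'] at this
      linarith
    -- distance bound
    have hterm : ∀ i, ‖(z' - z) i‖ ≤ d / ((n:ℝ) + 1) := by
      intro i
      have hdn : d' + d' = d / ((n:ℝ) + 1) := by
        rw [hd']
        field_simp
        ring
      by_cases hi : ξ i < 0
      · have he1 : Real.exp (-s) < d' := by
          rw [← Real.exp_log hd'pos]
          exact Real.exp_lt_exp.mpr hslog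
        have he2 : Real.exp (t * ξ i) < d' := by
          rw [← Real.exp_log hd'pos]
          exact Real.exp_lt_exp.mpr (htsmall i hi)
        have : (z' - z) i = ((Real.exp (-s) - Real.exp (t * ξ i) : ℝ) : ℂ) := by
          simp only [Pi.sub_apply, hz', hz, hi, if_true, Complex.ofReal_sub]
        rw [this, Complex.norm_real, Real.norm_eq_abs]
        rw [abs_le]
        constructor
        · have := Real.exp_pos (t * ξ i)
          have := Real.exp_pos (-s)
          nlinarith [hd'pos]
        · have := Real.exp_pos (t * ξ i)
          nlinarith [hd'pos]
      · have : (z' - z) i = 0 := by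
          simp only [Pi.sub_apply, hz', hi, if_false, sub_self]
        rw [this]
        simp only [norm_zero]
        positivity
    have hdist : eucNorm (z' - z) < d := by
      have hsum : (∑ i, ‖(z' - z) i‖ ^ 2) < d ^ 2 := by
        have hle : (∑ i, ‖(z' - z) i‖ ^ 2) ≤ ∑ _i : Fin n, (d / ((n:ℝ) + 1)) ^ 2 := by
          apply Finset.sum_le_sum
          intro i _
          exact pow_le_pow_left₀ (norm_nonneg _) (hterm i) 2
        have hce : (∑ _i : Fin n, (d / ((n:ℝ) + 1)) ^ 2) = (n:ℝ) * (d / ((n:ℝ) + 1)) ^ 2 := by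
          rw [Finset.sum_const, Finset.card_univ, Fintype.card_fin, nsmul_eq_mul]
        have hlt : (n:ℝ) * (d / ((n:ℝ) + 1)) ^ 2 < d ^ 2 := by
          have hn0 : (0:ℝ) ≤ (n:ℝ) := Nat.cast_nonneg n
          have hd2 : 0 < d ^ 2 := by positivity
          rw [div_pow, ← mul_div_assoc, div_lt_iff₀ (by positivity : (0:ℝ) < ((n:ℝ)+1)^2)]
          nlinarith [mul_nonneg (mul_nonneg hn0 hn0) hd2.le, mul_nonneg hn0 hd2.le, hd2]
        linarith
      rw [eucNorm]
      rw [show d = Real.sqrt (d ^ 2) by rw [Real.sqrt_sq hd.le]]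
      exact Real.sqrt_lt_sqrt (Finset.sum_nonneg fun i _ => sq_nonneg _) hsum
    have h3 : |u (z + (z' - z)) - u z| < 1 := hUC1 z (z' - z) hdist
    have hzz : z + (z' - z) = z' := by abel
    rw [hzz] at h3
    have h4 : u z - u z' < 1 := by
      have := abs_lt.mp h3
      -- h3 : |u z' - u z| < 1
      linarith [this.1, this.2]
    have h5 : t * (L + δ₀) ≤ t * suppFn S ξ := mul_le_mul_of_nonneg_left hgap htpos.le
    rw [mul_add] at h5
    linarith
  refine ⟨key, fun α C hα hα1 hH => key ?_⟩
  intro ε hε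
  set C' : ℝ := max C 0 with hC'
  have hC'0 : 0 ≤ C' := le_max_right _ _
  set d : ℝ := (ε / (C' + 1)) ^ (α⁻¹) with hddef
  have hdpos : 0 < d := Real.rpow_pos_of_pos (by positivity) _
  refine ⟨d, hdpos, fun x y hy => ?_⟩
  have hy0 : 0 ≤ eucNorm y := Real.sqrt_nonneg _
  have h1 : |u (x + y) - u x| ≤ C * eucNorm ((x + y) - x) ^ α := hH (x + y) x
  have h2 : (x + y) - x = y := by abel
  rw [h2] at h1
  have h3 : eucNorm y ^ α < d ^ α := Real.rpow_lt_rpow hy0 hy hα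
  have h4 : d ^ α = ε / (C' + 1) := by
    rw [hddef, ← Real.rpow_mul (by positivity), inv_mul_cancel₀ hα.ne', Real.rpow_one]
  have h5 : C * eucNorm y ^ α ≤ C' * eucNorm y ^ α :=
    mul_le_mul_of_nonneg_right (le_max_left _ _) (Real.rpow_nonneg hy0 _)
  have h6 : C' * eucNorm y ^ α ≤ C' * d ^ α := mul_le_mul_of_nonneg_left h3.le hC'0
  have h7 : C' * d ^ α < ε := by
    rw [h4, ← mul_div_assoc, div_lt_iff₀ (by positivity : (0:ℝ) < C' + 1)]
    nlinarith
  calc |u (x + y) - u x| ≤ C * eucNorm y ^ α := h1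
    _ ≤ C' * eucNorm y ^ α := h5
    _ ≤ C' * d ^ α := h6
    _ < ε := h7


end
end
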